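/- Let n ∈ ℕ, c₁, c₂ ∈ [0,1), Λ > 0 and k real constants, L : ℝ → ℝ a smooth positive 1-periodic function, and μ : ℝ² → ℝ a smooth ℤ²-periodic function. Define the smooth field of symmetric bilinear forms on ℝ³: g̃ = Λ(dx⊗dz + dz⊗dx) + L(z)²·dy⊗dy + (k − nΛz)(dy⊗dz + dz⊗dy) + μ(y,z)·dz⊗dz. Then: (i) g̃ is invariant under Γ_{n,c₁,c₂}; (ii) the diffeomorphism σ of ℝ³ defined by σ(x,y,z) = (x + z, y, z) normalizes Γ_{n,c₁,c₂}; (iii) σ*g̃ = g̃ + 2Λ·dz⊗dz; in particular σ*g̃ ≠ g̃, so σ is not an isometry of g̃. -/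

import Mathlib

noncomputable section

/-- The bijection `(x,y,z) ↦ (x + φ(y,z), y + ψ(z), z + b)` of `ℝ³`. -/
def affMap (φ : ℝ × ℝ → ℝ) (ψ : ℝ → ℝ) (b : ℝ) : Equiv.Perm (ℝ × ℝ × ℝ) where
  toFun p := (p.1 + φ p.2, p.2.1 + ψ p.2.2, p.2.2 + b)
  invFun p := (p.1 - φ (p.2.1 - ψ (p.2.2 - b), p.2.2 - b), p.2.1 - ψ (p.2.2 - b), p.2.2 - b)
  left_inv := by rintro ⟨x, y, z⟩; simp
  right_inv := by rintro ⟨x, y, z⟩; simp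

/-- The group `Γ_{n,c₁,c₂}`, generated by `(x,y,z) ↦ (x+1,y,z)`,
`(x,y,z) ↦ (x+c₁,y+1,z)` and `(x,y,z) ↦ (x+ny+c₂,y,z+1)`. -/
def Gamma (n : ℕ) (c₁ c₂ : ℝ) : Subgroup (Equiv.Perm (ℝ × ℝ × ℝ)) :=
  Subgroup.closure
    { affMap (fun _ => 1) (fun _ => 0) 0,
      affMap (fun _ => c₁) (fun _ => 1) 0,
      affMap (fun q => n * q.1 + c₂) (fun _ => 0) 1 }

/-- The metric `g̃ = Λ(dx⊗dz + dz⊗dx) + L(z)²·dy⊗dy + (k − nΛz)(dy⊗dz + dz⊗dy)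
+ μ(y,z)·dz⊗dz`. -/
def gFourteen (n : ℕ) (Λ k : ℝ) (L : ℝ → ℝ) (μ : ℝ × ℝ → ℝ) (p u v : ℝ × ℝ × ℝ) : ℝ :=
  Λ * (u.1 * v.2.2 + u.2.2 * v.1) + (L p.2.2) ^ 2 * u.2.1 * v.2.1
    + (k - n * Λ * p.2.2) * (u.2.1 * v.2.2 + u.2.2 * v.2.1)
    + μ p.2 * (u.2.2 * v.2.2)

lemma affMap_apply (φ ψ b p) : affMap φ ψ b p = (p.1 + φ p.2, p.2.1 + ψ p.2.2, p.2.2 + b) := rfl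

/-- composition of the special class -/
lemma affMap_mul (m a s b m' a' s' b' : ℝ) :
    affMap (fun q => m * q.1 + a) (fun _ => s) b * affMap (fun q => m' * q.1 + a') (fun _ => s') b'
      = affMap (fun q => (m + m') * q.1 + (a + a' + m * s')) (fun _ => s + s') (b + b') := by
  apply Equiv.ext
  rintro ⟨x, y, z⟩
  simp [Equiv.Perm.mul_apply, affMap_apply]
  constructor
  · ring
  · constructor <;> ring

lemma affMap_inv (m a s b : ℝ) :
    (affMap (fun q => m * q.1 + a) (fun _ => s) b)⁻¹
      = affMap (fun q => (-m) * q.1 + (-a + m * s)) (fun _ => -s) (-b) := by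
  symm
  apply eq_inv_of_mul_eq_one_left
  rw [affMap_mul]
  apply Equiv.ext
  rintro ⟨x, y, z⟩
  simp [affMap_apply]


def Amap (m r : ℝ) : (ℝ × ℝ × ℝ) →L[ℝ] (ℝ × ℝ × ℝ) :=
  ((ContinuousLinearMap.fst ℝ ℝ (ℝ × ℝ))
    + m • ((ContinuousLinearMap.fst ℝ ℝ ℝ).comp (ContinuousLinearMap.snd ℝ ℝ (ℝ × ℝ)))
    + r • ((ContinuousLinearMap.snd ℝ ℝ ℝ).comp (ContinuousLinearMap.snd ℝ ℝ (ℝ × ℝ)))).prod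
    (ContinuousLinearMap.snd ℝ ℝ (ℝ × ℝ))

lemma Amap_apply (m r : ℝ) (u : ℝ × ℝ × ℝ) :
    Amap m r u = (u.1 + m * u.2.1 + r * u.2.2, u.2.1, u.2.2) := by
  simp [Amap, ContinuousLinearMap.prod_apply]

lemma fderiv_aff (m r a s b : ℝ) (f : ℝ × ℝ × ℝ → ℝ × ℝ × ℝ)
    (hf : ∀ p, f p = (p.1 + (m * p.2.1 + r * p.2.2 + a), p.2.1 + s, p.2.2 + b))
    (p u : ℝ × ℝ × ℝ) :
    fderiv ℝ f p u = (u.1 + m * u.2.1 + r * u.2.2, u.2.1, u.2.2) := by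
  have hfe : f = fun q => Amap m r q + (a, s, b) := by
    funext q
    rw [hf q, Amap_apply]
    simp [Prod.ext_iff]
    ring
  have : HasFDerivAt f (Amap m r) p := by
    rw [hfe]
    exact ((Amap m r).hasFDerivAt).add_const (a, s, b)
  rw [this.fderiv, Amap_apply]

lemma per_int (f : ℝ → ℝ) (h : ∀ x, f (x + 1) = f x) (b : ℤ) (x : ℝ) : f (x + b) = f x := by
  induction b using Int.induction_on with
  | zero => simp
  | succ k ih =>
      push_cast at ih ⊢
      rw [show x + ((k : ℝ) + 1) = (x + k) + 1 by ring, h, ih]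
  | pred k ih =>
      push_cast at ih ⊢
      have h2 := h (x + (-(k : ℝ) - 1))
      rw [show x + (-(k : ℝ) - 1) + 1 = x + -(k : ℝ) by ring] at h2
      rw [← h2]
      exact ih

lemma affMap_congr (f f' : ℝ × ℝ → ℝ) (g g' : ℝ → ℝ) (b b' : ℝ)
    (hf : ∀ q, f q = f' q) (hg : ∀ z, g z = g' z) (hb : b = b') :
    affMap f g b = affMap f' g' b' := by
  subst hb
  apply Equiv.ext
  intro p
  simp [affMap_apply, hf, hg]

lemma gamma_struct (n : ℕ) (c₁ c₂ : ℝ) (φ : Equiv.Perm (ℝ × ℝ × ℝ)) (hφ : φ ∈ Gamma n c₁ c₂) :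
    ∃ (a : ℝ) (s b : ℤ),
      φ = affMap (fun q => ((n : ℝ) * (b : ℝ)) * q.1 + a) (fun _ => (s : ℝ)) (b : ℝ) := by
  induction hφ using Subgroup.closure_induction with
  | mem x hx =>
      rcases hx with h | h | h
      · exact ⟨1, 0, 0, h.trans (affMap_congr _ _ _ _ _ _
          (fun q => by push_cast; ring) (fun z => by push_cast; ring) (by push_cast; ring))⟩
      · exact ⟨c₁, 1, 0, h.trans (affMap_congr _ _ _ _ _ _
          (fun q => by push_cast; ring) (fun z => by push_cast; ring) (by push_cast; ring))⟩
      · exact ⟨c₂, 0, 1, h.trans (affMap_congr _ _ _ _ _ _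
          (fun q => by push_cast; ring) (fun z => by push_cast; ring) (by push_cast; ring))⟩
  | one =>
      refine ⟨0, 0, 0, ?_⟩
      apply Equiv.ext
      intro p
      simp [affMap_apply]
  | mul x y hx hy ihx ihy =>
      obtain ⟨a, s, b, rfl⟩ := ihx
      obtain ⟨a', s', b', rfl⟩ := ihy
      refine ⟨a + a' + (n : ℝ) * (b : ℝ) * (s' : ℝ), s + s', b + b', ?_⟩
      rw [affMap_mul]
      exact affMap_congr _ _ _ _ _ _ (fun q => by push_cast; ring)
        (fun z => by push_cast; ring) (by push_cast; ring)
  | inv x hx ihx =>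
      obtain ⟨a, s, b, rfl⟩ := ihx
      refine ⟨-a + (n : ℝ) * (b : ℝ) * (s : ℝ), -s, -b, ?_⟩
      rw [affMap_inv]
      exact affMap_congr _ _ _ _ _ _ (fun q => by push_cast; ring)
        (fun z => by push_cast; ring) (by push_cast; ring)

lemma g_inv_class (n : ℕ) (Λ k : ℝ) (L : ℝ → ℝ) (μ : ℝ × ℝ → ℝ)
    (hLper : ∀ z : ℝ, L (z + 1) = L z)
    (hμper : ∀ y z : ℝ, μ (y + 1, z) = μ (y, z) ∧ μ (y, z + 1) = μ (y, z))
    (a : ℝ) (s b : ℤ) (p u v : ℝ × ℝ × ℝ) :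
    gFourteen n Λ k L μ
      (affMap (fun q => ((n : ℝ) * (b : ℝ)) * q.1 + a) (fun _ => (s : ℝ)) (b : ℝ) p)
      (fderiv ℝ (⇑(affMap (fun q => ((n : ℝ) * (b : ℝ)) * q.1 + a) (fun _ => (s : ℝ)) (b : ℝ))) p u)
      (fderiv ℝ (⇑(affMap (fun q => ((n : ℝ) * (b : ℝ)) * q.1 + a) (fun _ => (s : ℝ)) (b : ℝ))) p v)
      = gFourteen n Λ k L μ p u v := by
  have hf : ∀ q : ℝ × ℝ × ℝ,
      (affMap (fun q => ((n : ℝ) * (b : ℝ)) * q.1 + a) (fun _ => (s : ℝ)) (b : ℝ)) q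
        = (q.1 + ((n : ℝ) * (b : ℝ) * q.2.1 + 0 * q.2.2 + a), q.2.1 + (s : ℝ), q.2.2 + (b : ℝ)) := by
    intro q
    rw [affMap_apply]
    simp [Prod.ext_iff]
  rw [fderiv_aff ((n : ℝ) * (b : ℝ)) 0 a (s : ℝ) (b : ℝ) _ hf p u,
      fderiv_aff ((n : ℝ) * (b : ℝ)) 0 a (s : ℝ) (b : ℝ) _ hf p v, hf p]
  have hL : L (p.2.2 + (b : ℝ)) = L p.2.2 := per_int L hLper b p.2.2
  have hμ1 : μ (p.2.1 + (s : ℝ), p.2.2 + (b : ℝ)) = μ (p.2.1, p.2.2 + (b : ℝ)) :=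
    per_int (fun y => μ (y, p.2.2 + (b : ℝ))) (fun y => (hμper y _).1) s p.2.1
  have hμ2 : μ (p.2.1, p.2.2 + (b : ℝ)) = μ (p.2.1, p.2.2) :=
    per_int (fun z => μ (p.2.1, z)) (fun z => (hμper _ z).2) b p.2.2
  simp only [gFourteen]
  rw [hL, hμ1, hμ2]
  have hp2 : (p.2.1, p.2.2) = p.2 := rfl
  rw [hp2]
  ring

/-- translation in x -/
def gen1' (t : ℝ) : Equiv.Perm (ℝ × ℝ × ℝ) := affMap (fun _ => t) (fun _ => 0) 0

lemma gen1'_mul (t t' : ℝ) : gen1' t * gen1' t' = gen1' (t + t') := by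
  apply Equiv.ext
  rintro ⟨x, y, z⟩
  simp [gen1', Equiv.Perm.mul_apply, affMap_apply]
  ring

lemma gen1'_zero : gen1' 0 = 1 := by
  apply Equiv.ext
  rintro ⟨x, y, z⟩
  simp [gen1', affMap_apply]

lemma gen1'_mem (n : ℕ) (c₁ c₂ : ℝ) (b : ℤ) : gen1' (b : ℝ) ∈ Gamma n c₁ c₂ := by
  have h1 : gen1' 1 ∈ Gamma n c₁ c₂ := by
    apply Subgroup.subset_closure
    left; rfl
  induction b using Int.induction_on with
  | zero => rw [show ((0 : ℤ) : ℝ) = 0 by norm_num, gen1'_zero]; exact one_mem _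
  | succ k ih =>
      have : gen1' (((k : ℤ) + 1 : ℤ) : ℝ) = gen1' ((k : ℤ) : ℝ) * gen1' 1 := by
        rw [gen1'_mul]; push_cast; ring_nf
      rw [this]
      exact mul_mem ih h1
  | pred k ih =>
      have h2 : gen1' ((-(k : ℤ) - 1 : ℤ) : ℝ) * gen1' 1 = gen1' ((-(k : ℤ) : ℤ) : ℝ) := by
        rw [gen1'_mul]; push_cast; ring_nf
      have : gen1' ((-(k : ℤ) - 1 : ℤ) : ℝ) = gen1' ((-(k : ℤ) : ℤ) : ℝ) * (gen1' 1)⁻¹ := by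
        rw [← h2]; group
      rw [this]
      exact mul_mem ih (inv_mem h1)

lemma sigma_inv_apply (p : ℝ × ℝ × ℝ) :
    (affMap (fun w => w.2) (fun _ => 0) 0)⁻¹ p = (p.1 - p.2.2, p.2.1, p.2.2) := by
  simp [affMap, Equiv.Perm.inv_def, Equiv.symm]

lemma conj_formula (m a s b : ℝ) :
    affMap (fun w => w.2) (fun _ => 0) 0 * affMap (fun q => m * q.1 + a) (fun _ => s) b
        * (affMap (fun w => w.2) (fun _ => 0) 0)⁻¹
      = affMap (fun q => m * q.1 + a) (fun _ => s) b * gen1' b := by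
  apply Equiv.ext
  rintro ⟨x, y, z⟩
  simp only [Equiv.Perm.mul_apply, sigma_inv_apply, affMap_apply, gen1']
  simp [Prod.ext_iff]
  ring

lemma conj_formula' (m a s b : ℝ) :
    (affMap (fun w => w.2) (fun _ => 0) 0)⁻¹ * affMap (fun q => m * q.1 + a) (fun _ => s) b
        * affMap (fun w => w.2) (fun _ => 0) 0
      = affMap (fun q => m * q.1 + a) (fun _ => s) b * gen1' (-b) := by
  apply Equiv.ext
  rintro ⟨x, y, z⟩
  simp only [Equiv.Perm.mul_apply, sigma_inv_apply, affMap_apply, gen1']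
  simp [Prod.ext_iff]
  ring


/-- (i) `g̃` is `Γ_{n,c₁,c₂}`-invariant; (ii) `σ : (x,y,z) ↦ (x+z,y,z)` normalizes
`Γ_{n,c₁,c₂}`; (iii) `σ*g̃ = g̃ + 2Λ·dz⊗dz`; in particular `σ*g̃ ≠ g̃`, so `σ` is not an
isometry of `g̃`. -/
theorem stmt_14 (n : ℕ) (c₁ c₂ : ℝ)
    (hc₁ : c₁ ∈ Set.Ico (0 : ℝ) 1) (hc₂ : c₂ ∈ Set.Ico (0 : ℝ) 1)
    (Λ k : ℝ) (hΛ : 0 < Λ)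
    (L : ℝ → ℝ) (hLs : ContDiff ℝ (⊤ : ℕ∞) L) (hLpos : ∀ z : ℝ, 0 < L z)
    (hLper : ∀ z : ℝ, L (z + 1) = L z)
    (μ : ℝ × ℝ → ℝ) (hμs : ContDiff ℝ (⊤ : ℕ∞) μ)
    (hμper : ∀ y z : ℝ, μ (y + 1, z) = μ (y, z) ∧ μ (y, z + 1) = μ (y, z)) :
    (∀ φ ∈ Gamma n c₁ c₂, ∀ p u v : ℝ × ℝ × ℝ,
      gFourteen n Λ k L μ (φ p) (fderiv ℝ (⇑φ) p u) (fderiv ℝ (⇑φ) p v)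
        = gFourteen n Λ k L μ p u v) ∧
    (affMap (fun w => w.2) (fun _ => 0) 0 ∈ Subgroup.normalizer ((Gamma n c₁ c₂ : Subgroup (Equiv.Perm (ℝ × ℝ × ℝ))) : Set (Equiv.Perm (ℝ × ℝ × ℝ)))) ∧
    (∀ p u v : ℝ × ℝ × ℝ,
      gFourteen n Λ k L μ (affMap (fun w => w.2) (fun _ => 0) 0 p)
          (fderiv ℝ (⇑(affMap (fun w => w.2) (fun _ => 0) 0)) p u)
          (fderiv ℝ (⇑(affMap (fun w => w.2) (fun _ => 0) 0)) p v)
        = gFourteen n Λ k L μ p u v + 2 * Λ * (u.2.2 * v.2.2)) ∧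
    (∃ p u v : ℝ × ℝ × ℝ,
      gFourteen n Λ k L μ (affMap (fun w => w.2) (fun _ => 0) 0 p)
          (fderiv ℝ (⇑(affMap (fun w => w.2) (fun _ => 0) 0)) p u)
          (fderiv ℝ (⇑(affMap (fun w => w.2) (fun _ => 0) 0)) p v)
        ≠ gFourteen n Λ k L μ p u v) := by
  have hσ : ∀ q : ℝ × ℝ × ℝ,
      (affMap (fun w => w.2) (fun _ => 0) 0) q
        = (q.1 + ((0 : ℝ) * q.2.1 + 1 * q.2.2 + 0), q.2.1 + 0, q.2.2 + 0) := by
    intro q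
    rw [affMap_apply]
    simp [Prod.ext_iff]
  have part3 : ∀ p u v : ℝ × ℝ × ℝ,
      gFourteen n Λ k L μ (affMap (fun w => w.2) (fun _ => 0) 0 p)
          (fderiv ℝ (⇑(affMap (fun w => w.2) (fun _ => 0) 0)) p u)
          (fderiv ℝ (⇑(affMap (fun w => w.2) (fun _ => 0) 0)) p v)
        = gFourteen n Λ k L μ p u v + 2 * Λ * (u.2.2 * v.2.2) := by
    intro p u v
    rw [fderiv_aff 0 1 0 0 0 _ hσ p u, fderiv_aff 0 1 0 0 0 _ hσ p v, hσ p]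
    simp only [gFourteen]
    have hp2 : (p.2.1, p.2.2) = p.2 := rfl
    simp only [add_zero]
    rw [hp2]
    ring
  refine ⟨?_, ?_, part3, ?_⟩
  · intro φ hφ p u v
    obtain ⟨a, s, b, rfl⟩ := gamma_struct n c₁ c₂ φ hφ
    exact g_inv_class n Λ k L μ hLper hμper a s b p u v
  · rw [Subgroup.mem_normalizer_iff]
    intro g
    constructor
    · intro hg
      obtain ⟨a, s, b, rfl⟩ := gamma_struct n c₁ c₂ g hg
      rw [conj_formula]
      exact mul_mem hg (gen1'_mem n c₁ c₂ b)
    · intro hg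
      obtain ⟨a, s, b, hEq⟩ := gamma_struct n c₁ c₂ _ hg
      have hX : affMap (fun q => ((n : ℝ) * (b : ℝ)) * q.1 + a) (fun _ => (s : ℝ)) (b : ℝ)
          ∈ Gamma n c₁ c₂ := hEq ▸ hg
      have hg2 : g = (affMap (fun w => w.2) (fun _ => 0) 0)⁻¹
          * (affMap (fun w => w.2) (fun _ => 0) 0 * g * (affMap (fun w => w.2) (fun _ => 0) 0)⁻¹)
          * affMap (fun w => w.2) (fun _ => 0) 0 := by group
      rw [hg2, hEq, conj_formula']
      have hmem := gen1'_mem n c₁ c₂ (-b)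
      rw [show ((-b : ℤ) : ℝ) = -(b : ℝ) by push_cast; ring] at hmem
      exact mul_mem hX hmem
  · refine ⟨(0, 0, 0), (0, 0, 1), (0, 0, 1), ?_⟩
    rw [part3]
    intro h
    have : 2 * Λ * ((0, (0 : ℝ), (1 : ℝ)).2.2 * ((0 : ℝ), (0 : ℝ), (1 : ℝ)).2.2) = 0 := by
      linarith
    simp at this
    linarith
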